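/- Suppose x, y, u, a are finite random variables with the conditional independence x ⊥ y | (a,u). Then for every fixed action value a, the matrix identity P(Y | a, U)·P(U | a, X) = P(Y | a, X) holds. Consequently, if P(Y | a, U) is square and invertible, then P(U | a, X) = P(Y | a, U)^{-1}·P(Y | a, X). -/
import Mathlib


open Finset Matrix
open scoped Classical

noncomputable def Pr {Ω : Type*} [Fintype Ω] (μ : Ω → ℝ) (E : Ω → Prop) : ℝ :=
  ∑ ω, if E ω then μ ω else 0

noncomputable def cPr {Ω : Type*} [Fintype Ω] (μ : Ω → ℝ) (E F : Ω → Prop) : ℝ :=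
  Pr μ (fun ω => E ω ∧ F ω) / Pr μ F

lemma Pr_nonneg {Ω : Type*} [Fintype Ω] {μ : Ω → ℝ} (hμ : ∀ ω, 0 ≤ μ ω)
    (E : Ω → Prop) : 0 ≤ Pr μ E := by
  apply Finset.sum_nonneg
  intro ω _
  split <;> [exact hμ ω; exact le_rfl]

lemma Pr_mono {Ω : Type*} [Fintype Ω] {μ : Ω → ℝ} (hμ : ∀ ω, 0 ≤ μ ω)
    {E F : Ω → Prop} (h : ∀ ω, E ω → F ω) : Pr μ E ≤ Pr μ F := by
  apply Finset.sum_le_sum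
  intro ω _
  by_cases hE : E ω
  · simp [hE, h ω hE]
  · simp only [hE, if_false]
    split <;> [exact hμ ω; exact le_rfl]

lemma Pr_congr {Ω : Type*} [Fintype Ω] {μ : Ω → ℝ}
    {E F : Ω → Prop} (h : ∀ ω, E ω ↔ F ω) : Pr μ E = Pr μ F := by
  unfold Pr
  exact Finset.sum_congr rfl fun ω _ => by rw [if_congr (h ω) rfl rfl]

lemma Pr_split {Ω : Type*} [Fintype Ω] {μ : Ω → ℝ} {n : ℕ} (u : Ω → Fin n)
    (E : Ω → Prop) : Pr μ E = ∑ j, Pr μ (fun ω => E ω ∧ u ω = j) := by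
  unfold Pr
  rw [Finset.sum_comm]
  refine Finset.sum_congr rfl fun ω _ => ?_
  by_cases hE : E ω
  · simp [hE]
  · simp [hE]

/-- if `x ⊥ y | (a,u)` then `P(Y|a,U) * P(U|a,X) = P(Y|a,X)`; consequently, if
`P(Y|a,U)` is invertible then `P(U|a,X) = P(Y|a,U)⁻¹ * P(Y|a,X)`.
Here `x, y, u` take values in sets of common cardinality `n`. -/
theorem proxy_matrix_factorization_Y
    {Ω : Type*} [Fintype Ω] (μ : Ω → ℝ) {n : ℕ} {Aty : Type*}
    (x : Ω → Fin n) (y : Ω → Fin n) (u : Ω → Fin n) (a : Ω → Aty)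
    (hμ : ∀ ω, 0 ≤ μ ω) (hsum : ∑ ω, μ ω = 1)
    (av : Aty)
    (hposu : ∀ j, 0 < Pr μ (fun ω => a ω = av ∧ u ω = j))
    (hposx : ∀ k, 0 < Pr μ (fun ω => a ω = av ∧ x ω = k))
    -- conditional independence x ⊥ y | (a,u):  P(y | a,u,x) = P(y | a,u)
    (hCI : ∀ (yv j k : Fin n),
      cPr μ (fun ω => y ω = yv) (fun ω => a ω = av ∧ u ω = j ∧ x ω = k) =
        cPr μ (fun ω => y ω = yv) (fun ω => a ω = av ∧ u ω = j)) :
    ((Matrix.of fun (i j : Fin n) =>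
        cPr μ (fun ω => y ω = i) (fun ω => a ω = av ∧ u ω = j)) *
      (Matrix.of fun (j k : Fin n) =>
        cPr μ (fun ω => u ω = j) (fun ω => a ω = av ∧ x ω = k)) =
      Matrix.of fun (i k : Fin n) =>
        cPr μ (fun ω => y ω = i) (fun ω => a ω = av ∧ x ω = k)) ∧
    (IsUnit (Matrix.of fun (i j : Fin n) =>
        cPr μ (fun ω => y ω = i) (fun ω => a ω = av ∧ u ω = j)).det →
      (Matrix.of fun (j k : Fin n) =>
        cPr μ (fun ω => u ω = j) (fun ω => a ω = av ∧ x ω = k)) =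
      (Matrix.of fun (i j : Fin n) =>
        cPr μ (fun ω => y ω = i) (fun ω => a ω = av ∧ u ω = j))⁻¹ *
      (Matrix.of fun (i k : Fin n) =>
        cPr μ (fun ω => y ω = i) (fun ω => a ω = av ∧ x ω = k))) := by
  have key : ∀ (i j k : Fin n),
      cPr μ (fun ω => y ω = i) (fun ω => a ω = av ∧ u ω = j) *
        Pr μ (fun ω => a ω = av ∧ u ω = j ∧ x ω = k) =
      Pr μ (fun ω => y ω = i ∧ a ω = av ∧ u ω = j ∧ x ω = k) := by
    intro i j k
    by_cases hz : Pr μ (fun ω => a ω = av ∧ u ω = j ∧ x ω = k) = 0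
    · rw [hz, mul_zero]
      refine (le_antisymm ?_ (Pr_nonneg hμ _)).symm
      calc Pr μ (fun ω => y ω = i ∧ a ω = av ∧ u ω = j ∧ x ω = k)
          ≤ Pr μ (fun ω => a ω = av ∧ u ω = j ∧ x ω = k) :=
            Pr_mono hμ (fun ω h => h.2)
        _ = 0 := hz
    · have h1 := hCI i j k
      unfold cPr at h1 ⊢
      rw [← h1, div_mul_cancel₀ _ hz]
  have h1 : (Matrix.of fun (i j : Fin n) =>
        cPr μ (fun ω => y ω = i) (fun ω => a ω = av ∧ u ω = j)) *
      (Matrix.of fun (j k : Fin n) =>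
        cPr μ (fun ω => u ω = j) (fun ω => a ω = av ∧ x ω = k)) =
      Matrix.of fun (i k : Fin n) =>
        cPr μ (fun ω => y ω = i) (fun ω => a ω = av ∧ x ω = k) := by
    ext i k
    rw [Matrix.mul_apply]
    simp only [Matrix.of_apply]
    have hterm : ∀ j : Fin n,
        cPr μ (fun ω => y ω = i) (fun ω => a ω = av ∧ u ω = j) *
          cPr μ (fun ω => u ω = j) (fun ω => a ω = av ∧ x ω = k) =
        Pr μ (fun ω => y ω = i ∧ a ω = av ∧ u ω = j ∧ x ω = k) /
          Pr μ (fun ω => a ω = av ∧ x ω = k) := by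
      intro j
      have h2 : cPr μ (fun ω => u ω = j) (fun ω => a ω = av ∧ x ω = k) =
          Pr μ (fun ω => a ω = av ∧ u ω = j ∧ x ω = k) /
            Pr μ (fun ω => a ω = av ∧ x ω = k) := by
        unfold cPr
        congr 1
        exact Pr_congr fun ω => by tauto
      rw [h2, ← mul_div_assoc, key i j k]
    rw [Finset.sum_congr rfl fun j _ => hterm j, ← Finset.sum_div]
    have hsplit : Pr μ (fun ω => y ω = i ∧ a ω = av ∧ x ω = k) =
        ∑ j, Pr μ (fun ω => y ω = i ∧ a ω = av ∧ u ω = j ∧ x ω = k) := by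
      rw [Pr_split u (fun ω => y ω = i ∧ a ω = av ∧ x ω = k)]
      exact Finset.sum_congr rfl fun j _ => Pr_congr fun ω => by tauto
    unfold cPr
    rw [hsplit]
  refine ⟨h1, fun hdet => ?_⟩
  rw [← h1, ← Matrix.mul_assoc, Matrix.nonsing_inv_mul _ hdet, Matrix.one_mul]
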